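/- Let A be a finite abelian group with a nondegenerate quadratic function q, and let (B,β) be a Schellekens pair for (A,q). Then the subgroup Γ(B,β) of A × A is Lagrangian with respect to q×q⁻¹: it is isotropic and equals its own orthogonal complement Γ(B,β)^⊥ = {z ∈ A×A | τ(z,w) = 1 for all w ∈ Γ(B,β)}, where τ((a,b),(c,d)) = σ(a,c)σ(b,d)⁻¹. -/

import Mathlib

/-- The bicharacter `σ(a,b) = q(ab) q(a)⁻¹ q(b)⁻¹` associated to `q`. -/
def qSigma {A : Type*} [CommGroup A] (q : A → ℂˣ) (a b : A) : ℂˣ :=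
  q (a * b) * (q a)⁻¹ * (q b)⁻¹

/-- `q` is a quadratic function: `q(a⁻¹) = q(a)` and the associated `σ` is
multiplicative in each argument. -/
def IsQuadratic {A : Type*} [CommGroup A] (q : A → ℂˣ) : Prop :=
  (∀ a : A, q a⁻¹ = q a) ∧
  (∀ a b c : A, qSigma q (a * b) c = qSigma q a c * qSigma q b c) ∧
  (∀ a b c : A, qSigma q a (b * c) = qSigma q a b * qSigma q a c)

/-- `q` is nondegenerate: for every `a ≠ 1` the homomorphism `σ(a,−)` is nontrivial. -/
def IsNondeg {A : Type*} [CommGroup A] (q : A → ℂˣ) : Prop :=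
  ∀ a : A, a ≠ 1 → ∃ b : A, qSigma q a b ≠ 1

/-- `(B, β)` is a Schellekens pair for `(A, q)`: `β` is symmetric, multiplicative
in each argument, and `β(b,b) = q(b)` on the subgroup `B`. -/
def IsSchellekens {A : Type*} [CommGroup A] (q : A → ℂˣ) (B : Subgroup A)
    (β : B → B → ℂˣ) : Prop :=
  (∀ b c : B, β b c = β c b) ∧
  (∀ b c d : B, β (b * c) d = β b d * β c d) ∧
  (∀ b c d : B, β b (c * d) = β b c * β b d) ∧
  (∀ b : B, β b b = q (b : A))

/-- `Γ(B,β) = {(a, a⁻¹ b) | a ∈ A, b ∈ B, σ(c,a) = β(c,b) ∀ c ∈ B}` as a subset of `A × A`. -/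
def GammaSet {A : Type*} [CommGroup A] (q : A → ℂˣ) (B : Subgroup A)
    (β : B → B → ℂˣ) : Set (A × A) :=
  {z | ∃ b : B, z.2 = z.1⁻¹ * (b : A) ∧ ∀ c : B, qSigma q (c : A) z.1 = β c b}

/-- The bicharacter `τ((a,b),(c,d)) = σ(a,c) σ(b,d)⁻¹` on `A × A`
associated to the quadratic function `q × q⁻¹`. -/
def qTau {A : Type*} [CommGroup A] (q : A → ℂˣ) (z w : A × A) : ℂˣ :=
  qSigma q z.1 w.1 * (qSigma q z.2 w.2)⁻¹

section AuxBasics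

open Function

variable {A : Type*} [CommGroup A] {q : A → ℂˣ}

lemma qSigma_comm (q : A → ℂˣ) (a b : A) : qSigma q a b = qSigma q b a := by
  unfold qSigma; rw [mul_comm a b, mul_right_comm]

lemma q_mul (q : A → ℂˣ) (a b : A) : q (a * b) = qSigma q a b * q a * q b := by
  unfold qSigma; rw [Units.ext_iff]; push_cast; field_simp

lemma qSigma_one_left (hq : IsQuadratic q) (b : A) : qSigma q 1 b = 1 := by
  have h := hq.2.1 1 1 b
  rw [one_mul] at h
  have h2 : qSigma q 1 b * 1 = qSigma q 1 b * qSigma q 1 b := by rw [mul_one]; exact h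
  exact (mul_left_cancel h2).symm

lemma qSigma_one_right (hq : IsQuadratic q) (a : A) : qSigma q a 1 = 1 := by
  rw [qSigma_comm]; exact qSigma_one_left hq a

lemma qSigma_inv_left (hq : IsQuadratic q) (a b : A) : qSigma q a⁻¹ b = (qSigma q a b)⁻¹ := by
  have h := hq.2.1 a a⁻¹ b
  rw [mul_inv_cancel, qSigma_one_left hq] at h
  exact (inv_eq_of_mul_eq_one_right h.symm).symm

lemma qSigma_inv_right (hq : IsQuadratic q) (a b : A) : qSigma q a b⁻¹ = (qSigma q a b)⁻¹ := by
  rw [qSigma_comm, qSigma_inv_left hq, qSigma_comm]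

/-- the character `σ(·, a)`. -/
def qChi (hq : IsQuadratic q) (a : A) : A →* ℂˣ where
  toFun c := qSigma q c a
  map_one' := qSigma_one_left hq a
  map_mul' x y := hq.2.1 x y a

/-- the homomorphism `a ↦ σ(·, a)`. -/
def qPhi (hq : IsQuadratic q) : A →* (A →* ℂˣ) where
  toFun := qChi hq
  map_one' := by ext c; exact congrArg Units.val (qSigma_one_right hq c)
  map_mul' a b := by ext c; exact congrArg Units.val (hq.2.2 c a b)

@[simp] lemma qPhi_apply (hq : IsQuadratic q) (a c : A) : qPhi hq a c = qSigma q c a := rfl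

end AuxBasics

section AuxDual

open Function

variable (G : Type*) [CommGroup G] [Finite G]

lemma card_dual : Nat.card (G →* ℂˣ) = Nat.card G := by
  have : NeZero (Monoid.exponent G) := ⟨Monoid.exponent_ne_zero_of_finite⟩
  obtain ⟨e⟩ := CommGroup.monoidHom_mulEquiv_of_hasEnoughRootsOfUnity G ℂ
  exact Nat.card_congr e.toEquiv

lemma finite_dual : Finite (G →* ℂˣ) := by
  have : NeZero (Monoid.exponent G) := ⟨Monoid.exponent_ne_zero_of_finite⟩
  obtain ⟨e⟩ := CommGroup.monoidHom_mulEquiv_of_hasEnoughRootsOfUnity G ℂ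
  exact Finite.of_equiv G e.symm.toEquiv

lemma exists_char {a : G} (ha : a ≠ 1) : ∃ φ : G →* ℂˣ, φ a ≠ 1 := by
  have : NeZero (Monoid.exponent G) := ⟨Monoid.exponent_ne_zero_of_finite⟩
  exact CommGroup.exists_apply_ne_one_of_hasEnoughRootsOfUnity G ℂ ha

lemma surj_of_inj {G H : Type*} [Group G] [Group H] [Finite H] (f : G →* H)
    (hf : Injective f) (hcard : Nat.card H ≤ Nat.card G) : Surjective f := by
  rw [← MonoidHom.range_eq_top]
  apply Subgroup.eq_top_of_le_card
  calc Nat.card H ≤ Nat.card G := hcard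
    _ = Nat.card f.range := Nat.card_congr (Equiv.ofInjective f hf)

/-- restriction homomorphism on characters -/
def resHom {A : Type*} [CommGroup A] (B : Subgroup A) : (A →* ℂˣ) →* (B →* ℂˣ) where
  toFun χ := χ.comp B.subtype
  map_one' := by ext; simp
  map_mul' χ₁ χ₂ := by ext; simp

lemma res_surj {A : Type*} [CommGroup A] [Finite A] (B : Subgroup A) :
    Surjective (resHom B) := by
  have hfinA : Finite (A →* ℂˣ) := finite_dual A
  have hfinB : Finite (↥B →* ℂˣ) := finite_dual B
  rw [← MonoidHom.range_eq_top]
  apply Subgroup.eq_top_of_le_card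
  have hker : Nat.card (resHom B).ker ≤ Nat.card (A ⧸ B) := by
    rw [← card_dual (A ⧸ B)]
    have hinj : Injective (fun f : (resHom B).ker =>
        QuotientGroup.lift B (f : A →* ℂˣ)
          (fun x hx => DFunLike.congr_fun f.2 (⟨x, hx⟩ : B))) := by
      intro f g hfg
      ext a
      have := DFunLike.congr_fun hfg (QuotientGroup.mk a)
      exact congrArg Units.val this
    have : Finite (A ⧸ B →* ℂˣ) := finite_dual (A ⧸ B)
    exact Nat.card_le_card_of_injective _ hinj
  have h1 : Nat.card (resHom B).range * Nat.card (resHom B).ker = Nat.card (A →* ℂˣ) := by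
    rw [← Nat.card_congr (QuotientGroup.quotientKerEquivRange (resHom B)).toEquiv]
    exact (Subgroup.card_eq_card_quotient_mul_card_subgroup _).symm
  have h2 : Nat.card A = Nat.card (A ⧸ B) * Nat.card B :=
    Subgroup.card_eq_card_quotient_mul_card_subgroup B
  have hkpos : 0 < Nat.card (resHom B).ker := Nat.card_pos
  rw [card_dual B]
  have : Nat.card B * Nat.card (resHom B).ker ≤
      Nat.card (resHom B).range * Nat.card (resHom B).ker := by
    rw [h1, card_dual A, h2, mul_comm (Nat.card (A ⧸ B))]
    exact Nat.mul_le_mul_left _ hker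
  exact Nat.le_of_mul_le_mul_right this hkpos

end AuxDual

section AuxNondeg

open Function

variable {A : Type*} [CommGroup A] [Finite A] {q : A → ℂˣ}

lemma phi_surj (hq : IsQuadratic q) (hnd : IsNondeg q) : Surjective (qPhi hq) := by
  have : Finite (A →* ℂˣ) := finite_dual A
  apply surj_of_inj _ ?_ (le_of_eq (card_dual A))
  rw [injective_iff_map_eq_one]
  intro a ha
  by_contra h
  obtain ⟨b, hb⟩ := hnd a h
  apply hb
  have := DFunLike.congr_fun ha b
  rw [qSigma_comm]
  simpa using this

lemma exists_rep (hq : IsQuadratic q) (hnd : IsNondeg q) (B : Subgroup A) (ψ : B →* ℂˣ) :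
    ∃ a : A, ∀ c : B, qSigma q (c : A) a = ψ c := by
  obtain ⟨χ, hχ⟩ := res_surj B ψ
  obtain ⟨a, ha⟩ := phi_surj hq hnd χ
  refine ⟨a, fun c => ?_⟩
  have h1 := DFunLike.congr_fun ha (c : A)
  have h2 := DFunLike.congr_fun hχ c
  simp only [qPhi_apply] at h1
  rw [h1, ← h2]
  rfl

lemma mem_of_perp (hq : IsQuadratic q) (hnd : IsNondeg q) (B : Subgroup A) {x : A}
    (hx : ∀ a : A, (∀ c : B, qSigma q (c : A) a = 1) → qSigma q x a = 1) : x ∈ B := by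
  by_contra hxB
  have hx1 : (QuotientGroup.mk x : A ⧸ B) ≠ 1 := by
    simpa [QuotientGroup.eq_one_iff] using hxB
  obtain ⟨φ, hφ⟩ := exists_char (A ⧸ B) hx1
  set χ : A →* ℂˣ := φ.comp (QuotientGroup.mk' B) with hχdef
  obtain ⟨a, ha⟩ := phi_surj hq hnd χ
  have h1 : ∀ c : B, qSigma q (c : A) a = 1 := by
    intro c
    have := DFunLike.congr_fun ha (c : A)
    simp only [qPhi_apply] at this
    rw [this, hχdef]
    have : (QuotientGroup.mk (c : A) : A ⧸ B) = 1 := (QuotientGroup.eq_one_iff _).2 c.2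
    simp [this]
  have h2 := DFunLike.congr_fun ha x
  simp only [qPhi_apply] at h2
  have h3 := hx a h1
  rw [h2] at h3
  exact hφ (by simpa [hχdef] using h3)

end AuxNondeg

section AuxBeta

variable {A : Type*} [CommGroup A] {q : A → ℂˣ} {B : Subgroup A} {β : B → B → ℂˣ}

lemma beta_one_left (hβ : IsSchellekens q B β) (b : B) : β 1 b = 1 := by
  have h := hβ.2.1 1 1 b
  rw [one_mul] at h
  have h2 : β 1 b * 1 = β 1 b * β 1 b := by rw [mul_one]; exact h
  exact (mul_left_cancel h2).symm

lemma beta_one_right (hβ : IsSchellekens q B β) (b : B) : β b 1 = 1 := by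
  rw [hβ.1]; exact beta_one_left hβ b

lemma sigma_beta (hβ : IsSchellekens q B β) (b c : B) :
    qSigma q (b : A) (c : A) = β b c * β c b := by
  have e1 : qSigma q (b : A) (c : A) * q (b : A) * q (c : A) = q ((b : A) * (c : A)) :=
    (q_mul q _ _).symm
  have e2 : ((b : A) * (c : A)) = ((b * c : B) : A) := rfl
  rw [e2, ← hβ.2.2.2 (b * c), hβ.2.1, hβ.2.2.1, hβ.2.2.1, ← hβ.2.2.2 b, ← hβ.2.2.2 c] at e1
  -- e1 : σ * β b b * β c c = β b b * β b c * (β c b * β c c)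
  rw [Units.ext_iff] at e1 ⊢
  push_cast at e1 ⊢
  have hbb : ((β b b : ℂˣ) : ℂ) ≠ 0 := Units.ne_zero _
  have hcc : ((β c c : ℂˣ) : ℂ) ≠ 0 := Units.ne_zero _
  apply mul_left_cancel₀ hbb
  apply mul_left_cancel₀ hcc
  linear_combination e1

lemma sigma_beta_sq (hβ : IsSchellekens q B β) (b c : B) :
    qSigma q (b : A) (c : A) = β b c * β b c := by
  rw [sigma_beta hβ, hβ.1 c b]

/-- the character `β(·, b)` on `B`. -/
def betaHom (hβ : IsSchellekens q B β) (b : B) : B →* ℂˣ where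
  toFun c := β c b
  map_one' := beta_one_left hβ b
  map_mul' x y := hβ.2.1 x y b

end AuxBeta

/-- for nondegenerate `q`, the subgroup `Γ(B,β)` of `A × A` is Lagrangian
with respect to `q × q⁻¹`: it is isotropic and equals its own orthogonal complement. -/
theorem gamma_lagrangian {A : Type*} [CommGroup A] [Fintype A]
    (q : A → ℂˣ) (hq : IsQuadratic q) (hnd : IsNondeg q)
    (B : Subgroup A) (β : B → B → ℂˣ) (hβ : IsSchellekens q B β)
    (Γ : Subgroup (A × A)) (hΓ : (Γ : Set (A × A)) = GammaSet q B β) :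
    (∀ z ∈ Γ, q z.1 * (q z.2)⁻¹ = 1) ∧
    (Γ : Set (A × A)) = {z : A × A | ∀ w ∈ Γ, qTau q z w = 1} := by
  have memΓ : ∀ z : A × A, z ∈ Γ ↔
      ∃ b : B, z.2 = z.1⁻¹ * (b : A) ∧ ∀ c : B, qSigma q (c : A) z.1 = β c b := by
    intro z
    constructor
    · intro hz; exact (Set.ext_iff.mp hΓ z).1 hz
    · intro hz; exact (Set.ext_iff.mp hΓ z).2 hz
  -- special elements of Γ
  have e1 : ∀ b : B, ((b : A), (b : A)) ∈ Γ := by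
    intro b
    refine (memΓ _).2 ⟨b * b, ?_, ?_⟩
    · push_cast; group
    · intro c
      have : β c (b * b) = β c b * β c b := hβ.2.2.1 c b b
      rw [this, ← sigma_beta_sq hβ c b]
  have e2 : ∀ a : A, (∀ c : B, qSigma q (c : A) a = 1) → (a, a⁻¹) ∈ Γ := by
    intro a ha
    refine (memΓ _).2 ⟨1, by simp, ?_⟩
    intro c
    rw [ha c, beta_one_right hβ]
  have e3 : ∀ b : B, ∃ a : A, (a, a⁻¹ * (b : A)) ∈ Γ ∧
      ∀ c : B, qSigma q (c : A) a = β c b := by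
    intro b
    obtain ⟨a, ha⟩ := exists_rep hq hnd B (betaHom hβ b)
    exact ⟨a, (memΓ _).2 ⟨b, rfl, ha⟩, ha⟩
  -- isotropy
  have isot : ∀ z ∈ Γ, q z.1 * (q z.2)⁻¹ = 1 := by
    intro z hz
    obtain ⟨b, hz2, hzc⟩ := (memΓ z).1 hz
    have key : q z.2 = q z.1 := by
      rw [hz2, q_mul q z.1⁻¹ (b : A), qSigma_inv_left hq, hq.1,
        qSigma_comm q z.1 (b : A), hzc b, hβ.2.2.2 b]
      rw [Units.ext_iff]; push_cast; field_simp
    rw [key, mul_inv_cancel]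
  refine ⟨isot, ?_⟩
  ext z
  simp only [Set.mem_setOf_eq, SetLike.mem_coe]
  constructor
  · -- Γ ⊆ Γ^⊥
    intro hz w hw
    obtain ⟨b, hz2, hzc⟩ := (memΓ z).1 hz
    obtain ⟨y, hw2, hwc⟩ := (memΓ w).1 hw
    have hA : qSigma q z.1 (y : A) = β y b := by
      rw [qSigma_comm]; exact hzc y
    have hB : qSigma q (b : A) w.1 = β b y := hwc b
    have hC : qSigma q (b : A) (y : A) = β b y * β y b := sigma_beta hβ b y
    have expand : qSigma q z.2 w.2 = qSigma q z.1 w.1 := by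
      rw [hz2, hw2, hq.2.1, qSigma_inv_left hq, hq.2.2, hq.2.2,
        qSigma_inv_right hq, qSigma_inv_right hq, hA, hB, hC]
      rw [Units.ext_iff]; push_cast; field_simp
    unfold qTau
    rw [expand, mul_inv_cancel]
  · -- Γ^⊥ ⊆ Γ
    intro hz
    have hτ : ∀ w ∈ Γ, qSigma q z.1 w.1 = qSigma q z.2 w.2 := by
      intro w hw
      have := hz w hw
      unfold qTau at this
      exact mul_inv_eq_one.mp this
    -- step 1 : z.1 * z.2 ∈ B
    have hb0 : z.1 * z.2 ∈ B := by
      apply mem_of_perp hq hnd B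
      intro a ha
      have h := hτ (a, a⁻¹) (e2 a ha)
      simp only at h
      rw [qSigma_inv_right hq] at h
      rw [qSigma_comm, hq.2.2, qSigma_comm q a z.1, h]
      rw [qSigma_comm q a z.2]
      simp
    set b₀ : B := ⟨z.1 * z.2, hb0⟩ with hb₀
    have hcoe : (b₀ : A) = z.1 * z.2 := rfl
    -- the two diagonal relations
    have hu : ∀ b : B, qSigma q z.1 (b : A) = qSigma q z.2 (b : A) := by
      intro b
      exact hτ ((b : A), (b : A)) (e1 b)
    refine (memΓ z).2 ⟨b₀, ?_, ?_⟩
    · rw [hcoe]; group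
    · intro c
      obtain ⟨a, haΓ, hac⟩ := e3 c
      have h5 := hτ (a, a⁻¹ * (c : A)) haΓ
      simp only at h5
      rw [hq.2.2, qSigma_inv_right hq] at h5
      -- h5 : σ(z1,a) = σ(z2,a)⁻¹ * σ(z2,c)
      have h6 : qSigma q (b₀ : A) a = qSigma q z.2 (c : A) := by
        rw [hcoe, hq.2.1, h5]
        rw [Units.ext_iff]; push_cast; field_simp
      have h7 : qSigma q (b₀ : A) a = β b₀ c := hac b₀
      rw [qSigma_comm, hu c, ← h6, h7, hβ.1]
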